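/- Let (Π, Γ) : ℝ → ℝ³ × ℝ³ satisfy the heavy top equations Π' = Π × Ω + mgh Γ × χ and Γ' = Γ × Ω, and suppose Γ(t) = λ Ω(t) for a constant λ. Then N := Π + Γ satisfies N' = N × Ω + p × Ω with p = -mghλχ. -/

import Mathlib

/-- Heavy top / rigid body with rotors matching: if `(Π, Γ)` satisfies the heavy top
equations `Π' = Π × Ω + mgh Γ × χ`, `Γ' = Γ × Ω`, and `Γ = λΩ` for a constant `λ`,
then `N := Π + Γ` satisfies `N' = N × Ω + p × Ω` with `p = -mghλχ`. -/
theorem heavy_top_rotor_matching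
    (m g h lam : ℝ) (χ : Fin 3 → ℝ) (Ω P Γ : ℝ → Fin 3 → ℝ)
    (hP : ∀ t, HasDerivAt P
      (crossProduct (P t) (Ω t) + (m * g * h) • crossProduct (Γ t) χ) t)
    (hΓ : ∀ t, HasDerivAt Γ (crossProduct (Γ t) (Ω t)) t)
    (hlam : ∀ t, Γ t = lam • Ω t) :
    ∀ t, HasDerivAt (fun s => P s + Γ s)
      (crossProduct (P t + Γ t) (Ω t)
        + crossProduct (-(m * g * h * lam) • χ) (Ω t)) t := by
  intro t
  have := (hP t).add (hΓ t)
  refine this.congr_deriv (Eq.symm ?_)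
  rw [hlam t]
  simp only [map_add, map_smul, LinearMap.add_apply, LinearMap.smul_apply, map_smul]
  rw [show (crossProduct (Ω t)) (Ω t) = 0 from cross_self _]
  rw [show (crossProduct χ) (Ω t) = -((crossProduct (Ω t)) χ) from (cross_anticomm _ _).symm]
  module
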